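/- Let W be a module with non-degenerate Hermitian or skew-Hermitian form β in which every transversal pair of complemented submodules is adjoinable. For x, z common complements of a and b, the adjoint of M_{xabz} = P^a_x - P^z_b is M_{a^⊥ x^⊥ z^⊥ b^⊥} = -M_{x^⊥ a^⊥ b^⊥ z^⊥}. Consequently (Γ(x,a,y,b,z))^⊥ = Γ(x^⊥, b^⊥, y^⊥, a^⊥, z^⊥) for all x,y,z ∈ C_{ab}, i.e., orthocomplementation reverses the middle two arguments of the restricted multiplication map. -/

import Mathlib

open Classical in
/-- The projection `P^a_x` with image `x` and kernel `a` (zero if not complementary). -/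
noncomputable def projEnd {B W : Type*} [Ring B] [AddCommGroup W] [Module B W]
    (x a : Submodule B W) : Module.End B W :=
  if h : IsCompl x a then x.subtype ∘ₗ x.linearProjOfIsCompl a h else 0

/-- The orthogonal complement of a submodule with respect to a form `β`. -/
def perpSub {B W : Type*} [Ring B] [AddCommGroup W] [Module B W]
    (β : W → W → B)
    (hadd₂ : ∀ v w w' : W, β v (w + w') = β v w + β v w')
    (hsmul₂ : ∀ (r : B) (v w : W), β v (r • w) = β v w * r)
    (S : Submodule B W) : Submodule B W where
  carrier := {w | ∀ s ∈ S, β s w = 0}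
  add_mem' := fun {w w'} hw hw' s hs => by
    rw [hadd₂, hw s hs, hw' s hs, add_zero]
  zero_mem' := fun s _ => by
    have h := hadd₂ s 0 0
    rw [add_zero] at h
    exact (left_eq_add.mp h)
  smul_mem' := fun r w hw s hs => by
    rw [hsmul₂, hw s hs, zero_mul]

section helpers
variable {B W : Type*} [Ring B] [AddCommGroup W] [Module B W]

lemma mem_perpSub {β : W → W → B} {hadd₂ : ∀ v w w' : W, β v (w + w') = β v w + β v w'}
    {hsmul₂ : ∀ (r : B) (v w : W), β v (r • w) = β v w * r} {S : Submodule B W} {w : W} :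
    w ∈ perpSub β hadd₂ hsmul₂ S ↔ ∀ s ∈ S, β s w = 0 := Iff.rfl

lemma projEnd_apply_left {x a : Submodule B W} (h : IsCompl x a) {w : W} (hw : w ∈ x) :
    projEnd x a w = w := by
  simp [projEnd, h, Submodule.projectionOnto_apply_of_mem_left h hw]
  exact congrArg Subtype.val (Submodule.projectionOnto_apply_of_mem_left h hw)

lemma projEnd_apply_right {x a : Submodule B W} (h : IsCompl x a) {w : W} (hw : w ∈ a) :
    projEnd x a w = 0 := by
  simp [projEnd, h, Submodule.projectionOnto_apply_of_mem_right h hw]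
  exact Submodule.projectionOnto_apply_of_mem_right h hw

lemma projEnd_mem (x a : Submodule B W) (w : W) : projEnd x a w ∈ x := by
  by_cases h : IsCompl x a
  · simp [projEnd, h]
  · simp [projEnd, h]

lemma projEnd_add_projEnd {x a : Submodule B W} (h : IsCompl x a) (w : W) :
    projEnd x a w + projEnd a x w = w := by
  simp [projEnd, h, h.symm]
  exact Submodule.projection_add_projection_eq_self h w

/-- key composition identity: `M_{xabz} ∘ M_{xbaz} = 1`. -/
lemma M_comp_M {x a z b : Submodule B W}
    (hxa : IsCompl x a) (hxb : IsCompl x b) (hza : IsCompl z a) (hzb : IsCompl z b) (w : W) :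
    (projEnd x a - projEnd b z) ((projEnd x b - projEnd a z) w) = w := by
  set u := projEnd z a w with hu
  set v := projEnd a z w with hv
  have hu_mem : u ∈ z := projEnd_mem z a w
  have hv_mem : v ∈ a := projEnd_mem a z w
  have hw : u + v = w := projEnd_add_projEnd hza w
  set c := projEnd b x v with hc
  have hc_mem : c ∈ b := projEnd_mem b x v
  have e2 : projEnd x b v + c = v := projEnd_add_projEnd hxb v
  set d := projEnd b x u with hd
  have hd_mem : d ∈ b := projEnd_mem b x u
  have e1 : projEnd x b u + d = u := projEnd_add_projEnd hxb u
  have hNz : projEnd a z u = 0 := projEnd_apply_right hza.symm hu_mem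
  have hNa : projEnd a z v = v := projEnd_apply_left (hza.symm) hv_mem
  have hNw : (projEnd x b - projEnd a z) w = projEnd x b w - v := by
    rw [← hw]; simp only [LinearMap.sub_apply, map_add, hNz, hNa]; abel
  rw [hNw]
  have ht_mem : projEnd x b w ∈ x := projEnd_mem x b w
  have hxid : projEnd x a (projEnd x b w) = projEnd x b w :=
    projEnd_apply_left hxa ht_mem
  have hva : projEnd x a v = 0 := projEnd_apply_right hxa hv_mem
  simp only [LinearMap.sub_apply, map_sub, hxid, hva]
  have hsplit : projEnd x b w = projEnd x b u + projEnd x b v := by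
    rw [← hw, map_add]
  have hzb_u : projEnd b z (projEnd x b u) = -d := by
    have : projEnd x b u = u - d := eq_sub_of_add_eq e1
    rw [this, map_sub, projEnd_apply_right hzb.symm hu_mem,
      projEnd_apply_left hzb.symm hd_mem]; abel
  have hzb_v : projEnd b z (projEnd x b v) = projEnd b z v - c := by
    have : projEnd x b v = v - c := eq_sub_of_add_eq e2
    rw [this, map_sub, projEnd_apply_left hzb.symm hc_mem]
  rw [hsplit, map_add, hzb_u, hzb_v]
  have h1 : projEnd x b u = u - d := eq_sub_of_add_eq e1
  have h2 : projEnd x b v = v - c := eq_sub_of_add_eq e2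
  rw [h1, h2, ← hw]
  abel

/-- From a right adjoint and (skew-)hermitian symmetry, get a left adjoint. -/
lemma adjLeft {B W : Type*} [Ring B] [StarRing B] [AddCommGroup W] [Module B W]
    (β : W → W → B)
    (hherm : (∀ v w : W, β v w = star (β w v)) ∨ (∀ v w : W, β v w = -star (β w v)))
    (F G : W → W) (hadj : ∀ w₁ w₂ : W, β w₁ (F w₂) = β (G w₁) w₂) (w₁ w₂ : W) :
    β (F w₁) w₂ = β w₁ (G w₂) := by
  rcases hherm with h | h
  · rw [h (F w₁) w₂, hadj, ← h]
  · rw [h (F w₁) w₂, hadj, h w₁ (G w₂)]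

end helpers

/-- if every transversal pair is adjoinable (with the adjoint of
`P^a_x` being `P^{x^⊥}_{a^⊥}`), then for `x, z` common complements of `a, b`,
the adjoint of `M_{xabz} = P^a_x - P^z_b` is
`M_{a^⊥x^⊥z^⊥b^⊥} = -M_{x^⊥a^⊥b^⊥z^⊥}`, and consequently
`(Γ(x,a,y,b,z))^⊥ = Γ(x^⊥,b^⊥,y^⊥,a^⊥,z^⊥)` for all `y ∈ C_{ab}`. -/
theorem stmt10 {B W : Type*} [Ring B] [StarRing B] [AddCommGroup W] [Module B W]
    (β : W → W → B)
    (hadd₁ : ∀ v v' w : W, β (v + v') w = β v w + β v' w)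
    (hadd₂ : ∀ v w w' : W, β v (w + w') = β v w + β v w')
    (hsmul₁ : ∀ (r : B) (v w : W), β (r • v) w = star r * β v w)
    (hsmul₂ : ∀ (r : B) (v w : W), β v (r • w) = β v w * r)
    (hnd₁ : ∀ v : W, (∀ w : W, β v w = 0) → v = 0)
    (hnd₂ : ∀ v : W, (∀ w : W, β w v = 0) → v = 0)
    (hherm : (∀ v w : W, β v w = star (β w v)) ∨ (∀ v w : W, β v w = -star (β w v)))
    -- every transversal pair of complemented submodules is adjoinable, and the
    -- adjoint of `P^u_v`... i.e. of the projection onto `u` along `v` is the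
    -- projection onto `v^⊥` along `u^⊥`:
    (hadjall : ∀ u v : Submodule B W, IsCompl u v →
      IsCompl (perpSub β hadd₂ hsmul₂ v) (perpSub β hadd₂ hsmul₂ u) ∧
      ∀ w₁ w₂ : W, β w₁ (projEnd u v w₂)
        = β (projEnd (perpSub β hadd₂ hsmul₂ v) (perpSub β hadd₂ hsmul₂ u) w₁) w₂)
    (x a z b : Submodule B W)
    (hxa : IsCompl x a) (hxb : IsCompl x b) (hza : IsCompl z a) (hzb : IsCompl z b) :
    letI perp := perpSub β hadd₂ hsmul₂
    -- the adjoint of M_{xabz} = P^a_x - P^z_b is M_{a^⊥x^⊥z^⊥b^⊥} = P^{x^⊥}_{a^⊥} - P^{b^⊥}_{z^⊥}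
    (∀ v w : W, β v ((projEnd x a - projEnd b z) w)
        = β ((projEnd (perp a) (perp x) - projEnd (perp z) (perp b)) v) w) ∧
    -- and M_{a^⊥x^⊥z^⊥b^⊥} = -M_{x^⊥a^⊥b^⊥z^⊥}
    (projEnd (perp a) (perp x) - projEnd (perp z) (perp b)
        = -(projEnd (perp x) (perp a) - projEnd (perp b) (perp z))) ∧
    -- (Γ(x,a,y,b,z))^⊥ = Γ(x^⊥,b^⊥,y^⊥,a^⊥,z^⊥)
    (∀ y : Submodule B W, IsCompl y a → IsCompl y b →
      perp (Submodule.map (projEnd x a - projEnd b z) y)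
        = Submodule.map (projEnd (perp x) (perp b) - projEnd (perp a) (perp z)) (perp y)) := by
  set perp := perpSub β hadd₂ hsmul₂ with hperp
  -- basic linearity of β in each slot w.r.t. negation/subtraction
  have hBneg₂ : ∀ v w : W, β v (-w) = -β v w := by
    intro v w
    have h := hsmul₂ (-1) v w
    rw [neg_one_smul] at h
    rw [h, mul_neg_one]
  have hBsub₂ : ∀ v w w' : W, β v (w - w') = β v w - β v w' := by
    intro v w w'
    rw [sub_eq_add_neg, hadd₂, hBneg₂, ← sub_eq_add_neg]
  have hBneg₁ : ∀ v w : W, β (-v) w = -β v w := by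
    intro v w
    have h := hsmul₁ (-1) v w
    rw [neg_one_smul] at h
    rw [h]
    simp
  have hBsub₁ : ∀ v v' w : W, β (v - v') w = β v w - β v' w := by
    intro v v' w
    rw [sub_eq_add_neg, hadd₁, hBneg₁, ← sub_eq_add_neg]
  -- adjoints and complement facts
  obtain ⟨hcAX, hadjxa⟩ := hadjall x a hxa
  obtain ⟨hcZB, hadjbz⟩ := hadjall b z hzb.symm
  have hcXA : IsCompl (perp x) (perp a) := (hadjall a x hxa.symm).1
  have hcXB : IsCompl (perp x) (perp b) := (hadjall b x hxb.symm).1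
  have hcZA : IsCompl (perp z) (perp a) := (hadjall a z hza.symm).1
  -- part 1
  have part1 : ∀ v w : W, β v ((projEnd x a - projEnd b z) w)
      = β ((projEnd (perp a) (perp x) - projEnd (perp z) (perp b)) v) w := by
    intro v w
    simp only [LinearMap.sub_apply]
    rw [hBsub₂, hadjxa, hadjbz, ← hBsub₁]
  -- part 2
  have part2 : projEnd (perp a) (perp x) - projEnd (perp z) (perp b)
      = -(projEnd (perp x) (perp a) - projEnd (perp b) (perp z)) := by
    ext w
    simp only [LinearMap.sub_apply, LinearMap.neg_apply]
    have e1 : projEnd (perp a) (perp x) w = w - projEnd (perp x) (perp a) w :=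
      eq_sub_of_add_eq (projEnd_add_projEnd hcAX w)
    have e2 : projEnd (perp z) (perp b) w = w - projEnd (perp b) (perp z) w :=
      eq_sub_of_add_eq (projEnd_add_projEnd hcZB w)
    rw [e1, e2]
    abel
  refine ⟨part1, part2, ?_⟩
  -- part 3
  intro y hya hyb
  set M : Module.End B W := projEnd x a - projEnd b z with hM
  set M' : Module.End B W := projEnd (perp x) (perp b) - projEnd (perp a) (perp z) with hM'
  set M'' : Module.End B W := projEnd (perp x) (perp a) - projEnd (perp b) (perp z) with hM''
  set Ms : Module.End B W := projEnd (perp a) (perp x) - projEnd (perp z) (perp b) with hMs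
  have hM'M'' : ∀ w : W, M' (M'' w) = w := fun w => M_comp_M hcXB hcXA hcZB hcZA w
  have hM''M' : ∀ w : W, M'' (M' w) = w := fun w => M_comp_M hcXA hcXB hcZA hcZB w
  have hMadjL : ∀ v w : W, β (M v) w = β v (Ms w) :=
    adjLeft β hherm (fun w => M w) (fun w => Ms w) part1
  have hMsw : ∀ w : W, Ms w = -(M'' w) := fun w => by
    rw [part2, LinearMap.neg_apply]
  ext w
  simp only [Submodule.mem_map, mem_perpSub]
  constructor
  · intro hw
    refine ⟨M'' w, ?_, hM'M'' w⟩
    intro s hs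
    have h1 : β (M s) w = 0 := hw (M s) ⟨s, hs, rfl⟩
    have h2 : β (M s) w = β s (Ms w) := hMadjL s w
    rw [hMsw, hBneg₂] at h2
    rw [h1] at h2
    exact neg_eq_zero.mp h2.symm
  · rintro ⟨v, hv, rfl⟩ s hs
    rw [Submodule.mem_map] at hs
    obtain ⟨u, hu, rfl⟩ := hs
    rw [hMadjL, hMsw, hBneg₂, hM''M', hv u hu, neg_zero]
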